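/- Let G and E be divisors on C with deg G ≡ 0 (mod 2), E > 0, and ½·deg G − deg E ≥ 2g; put n = ½·deg G − deg E − g + 1 and n' = ½·deg G − g + 1 = n + deg E. Let ρ : L(G) → k be an E-compression functional, let D be a divisor of degree ½·deg G, and let X be a G-form representing D. Then there exist n' × n' permutation matrices P and Q such that in the block decomposition PXQ = [[a, b], [c, d]], with a of size deg E × deg E and d of size n × n, the matrix ρa (obtained from the block a by applying ρ entrywise) has nonzero determinant. -/

import Mathlib

/-- All 2×2 minors of a matrix vanish, i.e. the matrix has rank at most 1. -/
def MinorsVanish {R : Type} [CommRing R] {m n : Type} (M : Matrix m n R) : Prop :=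
  ∀ i i' j j', M i j * M i' j' = M i j' * M i' j

/-- A matrix is `k`-general if some row and some column each consist of
`k`-linearly independent entries. -/
def KGeneral (k : Type) [Field k] {V : Type} [AddCommMonoid V] [Module k V]
    {m n : Type} (M : Matrix m n V) : Prop :=
  (∃ i, LinearIndependent k fun j => M i j) ∧ ∃ j, LinearIndependent k fun i => M i j

/-- Two matrices over a `k`-algebra are `k`-equivalent if `Y = Φ X Ψ` for some
invertible square matrices `Φ`, `Ψ` with entries in `k`. -/
def KEquivalent (k : Type) [Field k] {A : Type} [CommRing A] [Algebra k A]
    {m n : Type} [Fintype m] [Fintype n] [DecidableEq m] [DecidableEq n]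
    (X Y : Matrix m n A) : Prop :=
  ∃ (Φ : Matrix m m k) (Ψ : Matrix n n k), IsUnit Φ.det ∧ IsUnit Ψ.det ∧
    Y = Φ.map (algebraMap k A) * X * Ψ.map (algebraMap k A)

/-- An abstraction of a nonsingular projective curve `C` of genus `g` over an
algebraically closed field `k`, packaged together with its function field `F = k(C)`,
the divisor `div f` of a nonzero rational function (divisors are finitely supported
`ℤ`-valued functions on the points of `C`), the Riemann–Roch spaces
`L(D) = {f : f = 0 ∨ div f + D ≥ 0}`, the rings `R_E` of functions regular near the
support of a divisor and the ideals `I_E` of functions vanishing to order at least `E`,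
subject to the standard facts about them (including the Riemann–Roch theorem). -/
structure AbstractCurve (k : Type) [Field k] : Type 1 where
  /-- the points of the curve -/
  Point : Type
  /-- the function field `k(C)` -/
  F : Type
  [fieldF : Field F]
  [algF : Algebra k F]
  /-- the genus of the curve -/
  genus : ℕ
  /-- `divOf f` is the divisor of zeros and poles of `f` (junk value `0` at `f = 0`);
  its value at a point `p` is the order of vanishing of `f` at `p`. -/
  divOf : F → (Point →₀ ℤ)
  divOf_mul : ∀ f g : F, f ≠ 0 → g ≠ 0 → divOf (f * g) = divOf f + divOf g
  divOf_algebraMap : ∀ c : k, c ≠ 0 → divOf (algebraMap k F c) = 0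
  divOf_eq_zero_iff : ∀ f : F, f ≠ 0 →
    (divOf f = 0 ↔ ∃ c : k, c ≠ 0 ∧ f = algebraMap k F c)
  /-- a principal divisor has degree zero -/
  deg_divOf : ∀ f : F, f ≠ 0 → (divOf f).sum (fun _ n => n) = 0
  /-- the Riemann–Roch space `L(D)` as a `k`-subspace of the function field -/
  RR : (Point →₀ ℤ) → Submodule k F
  mem_RR : ∀ (D : Point →₀ ℤ) (f : F), f ∈ RR D ↔ f = 0 ∨ 0 ≤ divOf f + D
  finite_RR : ∀ D : Point →₀ ℤ, Module.Finite k (RR D)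
  /-- the Riemann–Roch theorem: `ℓ(D) = deg D - g + 1` whenever `deg D > 2g - 2` -/
  rank_RR : ∀ D : Point →₀ ℤ, 2 * (genus : ℤ) - 2 < D.sum (fun _ n => n) →
    (Module.finrank k (RR D) : ℤ) = D.sum (fun _ n => n) - genus + 1
  /-- the `k`-space `R_E` of functions regular in a neighborhood of the support of `E` -/
  Reg : (Point →₀ ℤ) → Submodule k F
  mem_Reg : ∀ (E : Point →₀ ℤ) (f : F),
    f ∈ Reg E ↔ f = 0 ∨ ∀ p ∈ E.support, 0 ≤ divOf f p
  /-- the `k`-space `I_E ⊆ R_E` of functions vanishing to order at least `E` -/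
  VanishIdeal : (Point →₀ ℤ) → Submodule k F
  mem_VanishIdeal : ∀ (E : Point →₀ ℤ) (f : F),
    f ∈ VanishIdeal E ↔ f = 0 ∨ ∀ p ∈ E.support, E p ≤ divOf f p

namespace AbstractCurve

attribute [instance] fieldF algF

variable {k : Type} [Field k]

/-- The degree of a divisor. -/
def deg (C : AbstractCurve k) (D : C.Point →₀ ℤ) : ℤ := D.sum fun _ n => n

/-- Linear equivalence of divisors: `D ~ D'` iff `D' = D + div f` for some `f ≠ 0`. -/
def LinEquiv (C : AbstractCurve k) (D D' : C.Point →₀ ℤ) : Prop :=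
  ∃ f : C.F, f ≠ 0 ∧ D' = D + C.divOf f

/-- A `G`-form: a square matrix with entries in `L(G)`, all of whose 2×2 minors vanish,
and which is `k`-general.  (In context its size is `n = ½ deg G - g + 1`.) -/
def IsGForm (C : AbstractCurve k) (G : C.Point →₀ ℤ) {n : ℕ}
    (X : Matrix (Fin n) (Fin n) C.F) : Prop :=
  (∀ i j, X i j ∈ C.RR G) ∧ MinorsVanish X ∧ KGeneral k X

/-- The `G`-form `X` represents the divisor `D` (of degree `½ deg G`): `X = u v` where
the entries of the column vector `u` form a `k`-basis of `L(D)` and the entries of the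
row vector `v` form a `k`-basis of `L(G - D)`. -/
def Represents (C : AbstractCurve k) (G D : C.Point →₀ ℤ) {n : ℕ}
    (X : Matrix (Fin n) (Fin n) C.F) : Prop :=
  ∃ u v : Fin n → C.F,
    LinearIndependent k u ∧ Submodule.span k (Set.range u) = C.RR D ∧
    LinearIndependent k v ∧ Submodule.span k (Set.range v) = C.RR (G - D) ∧
    ∀ i j, X i j = u i * v j

/-- An `E`-compression functional `ρ : L(G) → k` (realized as a `k`-linear functional
on the function field): `ρ` kills `L(G - E)`, and for every divisor `D` of degree
`½ deg G` the induced pairing `(a, b) ↦ ρ(ab)` on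
`L(D)/L(D-E) × L(G-D)/L(G-D-E)` is a perfect pairing of `(deg E)`-dimensional
`k`-vector spaces (expressed by nondegeneracy on both sides together with both
quotients having dimension `deg E`). -/
def IsCompression (C : AbstractCurve k) (G E : C.Point →₀ ℤ) (ρ : C.F →ₗ[k] k) : Prop :=
  (∀ f ∈ C.RR (G - E), ρ f = 0) ∧
  ∀ D : C.Point →₀ ℤ, 2 * C.deg D = C.deg G →
    (∀ a ∈ C.RR D, (∀ b ∈ C.RR (G - D), ρ (a * b) = 0) → a ∈ C.RR (D - E)) ∧
    (∀ b ∈ C.RR (G - D), (∀ a ∈ C.RR D, ρ (a * b) = 0) → b ∈ C.RR (G - D - E)) ∧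
    (Module.finrank k
      (C.RR D ⧸ Submodule.comap (C.RR D).subtype (C.RR (D - E))) : ℤ) = C.deg E ∧
    (Module.finrank k
      (C.RR (G - D) ⧸
        Submodule.comap (C.RR (G - D)).subtype (C.RR (G - D - E))) : ℤ) = C.deg E

end AbstractCurve

section Aux

/-- From a finite family spanning a space of finrank `e`, extract an `e`-element
linearly independent subfamily. -/
lemma exists_subfamily_linearIndependent {K V ι : Type*} [Field K] [AddCommGroup V]
    [Module K V] [Fintype ι] {w : ι → V} {e : ℕ}
    (h : Module.finrank K (Submodule.span K (Set.range w)) = e) :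
    ∃ r : Fin e → ι, LinearIndependent K (w ∘ r) := by
  classical
  obtain ⟨b, hbsub, hbspan, hbind⟩ := exists_linearIndependent K (Set.range w)
  have hbfin : b.Finite := (Set.finite_range w).subset hbsub
  haveI : Fintype b := hbfin.fintype
  have hcard : Fintype.card b = e := by
    have := finrank_span_set_eq_card (s := b) hbind
    rw [hbspan, h] at this
    rw [this, Set.toFinset_card]
  let g : Fin e ≃ b := (Fintype.equivFinOfCardEq hcard).symm
  have hmem : ∀ i : Fin e, ∃ a, w a = ((g i : V)) := fun i => hbsub (g i).2
  choose r hr using hmem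
  refine ⟨r, ?_⟩
  have hwr : w ∘ r = fun i => ((g i : V)) := funext fun i => hr i
  rw [hwr]
  exact hbind.comp g g.injective

/-- Any two injections from a type into a fintype differ by a permutation. -/
lemma exists_perm_comp_eq {α β : Type*} [Fintype α] [DecidableEq α] {f g : β → α}
    (hf : Function.Injective f) (hg : Function.Injective g) :
    ∃ σ : Equiv.Perm α, ∀ i, σ (f i) = g i := by
  classical
  let eqv : { x // x ∈ Set.range f } ≃ { x // x ∈ Set.range g } :=
    (Equiv.ofInjective f hf).symm.trans (Equiv.ofInjective g hg)
  refine ⟨eqv.extendSubtype, fun i => ?_⟩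
  rw [eqv.extendSubtype_apply_of_mem (f i) ⟨i, rfl⟩]
  simp [eqv, Equiv.ofInjective_symm_apply]

/-- A square matrix with linearly independent columns has nonzero determinant. -/
lemma det_ne_zero_of_cols_linearIndependent {K : Type*} [Field K] {e : ℕ}
    {A : Matrix (Fin e) (Fin e) K} (h : LinearIndependent K A.transpose) : A.det ≠ 0 := by
  intro h0
  obtain ⟨x, hx0, hxA⟩ := Matrix.exists_mulVec_eq_zero_iff.mpr h0
  apply hx0
  funext j
  refine Fintype.linearIndependent_iff.mp h x ?_ j
  funext i
  have := congrFun hxA i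
  simpa [Matrix.mulVec, dotProduct, mul_comm] using this

end Aux

namespace AbstractCurve
variable {k : Type} [Field k]

lemma mul_mem_RR (C : AbstractCurve k) {A B : C.Point →₀ ℤ} {x y : C.F}
    (hx : x ∈ C.RR A) (hy : y ∈ C.RR B) : x * y ∈ C.RR (A + B) := by
  rcases eq_or_ne x 0 with rfl | hx0
  · rw [zero_mul]; exact (C.mem_RR _ 0).mpr (Or.inl rfl)
  rcases eq_or_ne y 0 with rfl | hy0
  · rw [mul_zero]; exact (C.mem_RR _ 0).mpr (Or.inl rfl)
  have hx' := ((C.mem_RR A x).mp hx).resolve_left hx0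
  have hy' := ((C.mem_RR B y).mp hy).resolve_left hy0
  refine (C.mem_RR _ _).mpr (Or.inr ?_)
  rw [C.divOf_mul x y hx0 hy0]
  calc (0 : C.Point →₀ ℤ) = 0 + 0 := (add_zero 0).symm
    _ ≤ (C.divOf x + A) + (C.divOf y + B) := add_le_add hx' hy'
    _ = C.divOf x + C.divOf y + (A + B) := by abel

end AbstractCurve

/-- View an `N × N` matrix, `N = e + n`, as a block matrix indexed by `Fin e ⊕ Fin n`
(upper-left block of size `e × e`, lower-right block of size `n × n`). -/
def asBlocks {R : Type} {N e n : ℕ} (h : N = e + n)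
    (M : Matrix (Fin N) (Fin N) R) : Matrix (Fin e ⊕ Fin n) (Fin e ⊕ Fin n) R :=
  M.submatrix (fun p => (finCongr h.symm) (finSumFinEquiv p))
    (fun p => (finCongr h.symm) (finSumFinEquiv p))

/-- Given a block decomposition `[[a, b], [c, d]]` of `M` (with `N = e + n`), the
compressed block
`z` from `[[w, x], [y, z]] = [[1, 0], [-(ρc)(ρa)⁻¹, 1]] · [[a, b], [c, d]] · [[1, -(ρa)⁻¹(ρb)], [0, 1]]`,
where `ρ` is applied entrywise to the blocks `a`, `b`, `c`. -/
noncomputable def compressedBlock {k : Type} [Field k] {F : Type} [Field F] [Algebra k F]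
    {N e n : ℕ} (h : N = e + n) (M : Matrix (Fin N) (Fin N) F) (ρ : F →ₗ[k] k) :
    Matrix (Fin n) (Fin n) F :=
  let B := asBlocks h M
  let a := B.toBlocks₁₁
  let b := B.toBlocks₁₂
  let c := B.toBlocks₂₁
  ((Matrix.fromBlocks 1 0 (-(c.map ρ * (a.map ρ)⁻¹)) 1).map (algebraMap k F) * B *
    (Matrix.fromBlocks 1 (-((a.map ρ)⁻¹ * b.map ρ)) 0 1).map (algebraMap k F)).toBlocks₂₂
open AbstractCurve in
/-- Let `G`, `E` be divisors with `deg G = 2s` even, `E > 0`, and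
`s - deg E ≥ 2g`; put `n = s - deg E - g + 1` and `n' = s - g + 1 = n + deg E`.  Let
`ρ : L(G) → k` be an `E`-compression functional, `D` a divisor of degree `s`, and `X` a
`G`-form representing `D`.  Then there exist `n' × n'` permutation matrices `P`, `Q`
such that, in the block decomposition `P X Q = [[a, b], [c, d]]` with `a` of size
`deg E × deg E` and `d` of size `n × n`, the matrix `ρ a` (apply `ρ` entrywise) has
nonzero determinant. -/
theorem compression_block_det_ne_zero (k : Type) [Field k] [IsAlgClosed k]
    (C : AbstractCurve k) (G E : C.Point →₀ ℤ) (s : ℤ)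
    (hG : C.deg G = 2 * s) (hE : 0 ≤ E) (hE0 : E ≠ 0)
    (hge : 2 * (C.genus : ℤ) ≤ s - C.deg E)
    (e n n' : ℕ) (he : (e : ℤ) = C.deg E)
    (hn : (n : ℤ) = s - C.deg E - C.genus + 1) (hn' : n' = e + n)
    (ρ : C.F →ₗ[k] k) (hρ : C.IsCompression G E ρ)
    (D : C.Point →₀ ℤ) (hD : C.deg D = s)
    (X : Matrix (Fin n') (Fin n') C.F) (hX : C.IsGForm G X) (hXD : C.Represents G D X) :
    ∃ σ τ : Equiv.Perm (Fin n'),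
      ((asBlocks hn' (X.submatrix σ τ)).toBlocks₁₁.map ρ).det ≠ 0 := by
  classical
  obtain ⟨u, v, hu_ind, hu_span, hv_ind, hv_span, hX_uv⟩ := hXD
  have hDdeg : 2 * C.deg D = C.deg G := by rw [hD, hG]
  obtain ⟨h1, h2, hq1, hq2⟩ := hρ.2 D hDdeg
  -- the linear map a ↦ (ρ (a * v j))_j
  set φ : C.F →ₗ[k] (Fin n' → k) :=
    LinearMap.pi (fun j => ρ.comp (LinearMap.mulRight k (v j))) with hφdef
  have hφ_apply : ∀ (a : C.F) (j), φ a j = ρ (a * v j) := fun a j => rfl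
  -- the Gram matrix of the compression pairing
  set M : Matrix (Fin n') (Fin n') k := Matrix.of (fun i j => ρ (u i * v j)) with hMdef
  -- the row span of M is the image of L(D) under φ
  have hrowspan : Submodule.span k (Set.range M) = Submodule.map φ (C.RR D) := by
    have hM' : (M : Fin n' → Fin n' → k) = φ ∘ u := rfl
    rw [hM', Set.range_comp, ← Submodule.map_span, hu_span]
  set ψ : ↥(C.RR D) →ₗ[k] (Fin n' → k) := φ.comp (C.RR D).subtype with hψdef
  -- φ restricted to L(D) has kernel L(D-E)
  have hker : LinearMap.ker ψ = Submodule.comap (C.RR D).subtype (C.RR (D - E)) := by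
    ext a
    simp only [LinearMap.mem_ker, Submodule.mem_comap, Submodule.coe_subtype]
    constructor
    · intro h0
      apply h1 (a : C.F) a.2
      intro b hb
      have hble : C.RR (G - D) ≤ LinearMap.ker (ρ.comp (LinearMap.mulLeft k (a : C.F))) := by
        rw [← hv_span, Submodule.span_le]
        rintro _ ⟨j, rfl⟩
        have hj : ρ ((a : C.F) * v j) = 0 := by
          have := congrFun h0 j
          simpa [hψdef, hφ_apply] using this
        simpa [LinearMap.mem_ker] using hj
      have := hble hb
      simpa [LinearMap.mem_ker] using this
    · intro hmem
      funext j
      have hvj : v j ∈ C.RR (G - D) := by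
        rw [← hv_span]; exact Submodule.subset_span ⟨j, rfl⟩
      have hmul : (a : C.F) * v j ∈ C.RR (G - E) := by
        have h' := C.mul_mem_RR hmem hvj
        have heq : D - E + (G - D) = G - E := by abel
        rwa [heq] at h'
      have : ρ ((a : C.F) * v j) = 0 := hρ.1 _ hmul
      simpa [hψdef, hφ_apply] using this
  -- hence the row span has dimension e
  have hfr : Module.finrank k (Submodule.span k (Set.range M)) = e := by
    have hrange : LinearMap.range ψ = Submodule.map φ (C.RR D) := by
      rw [hψdef, LinearMap.range_comp, Submodule.range_subtype]
    have hfe := (ψ.quotKerEquivRange).finrank_eq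
    rw [hker, hrange] at hfe
    have hq1' : Module.finrank k
        (↥(C.RR D) ⧸ Submodule.comap (C.RR D).subtype (C.RR (D - E))) = e := by
      have : ((e : ℤ)) = (Module.finrank k
          (↥(C.RR D) ⧸ Submodule.comap (C.RR D).subtype (C.RR (D - E))) : ℤ) := by
        rw [hq1, he]
      exact_mod_cast this.symm
    rw [hrowspan, ← hfe, hq1']
  -- extract e linearly independent rows
  obtain ⟨r, hr_ind⟩ := exists_subfamily_linearIndependent hfr
  have hr_inj : Function.Injective r := fun i i' hii => hr_ind.injective (by
    show M (r i) = M (r i'); rw [hii])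
  -- the e × n' submatrix on those rows has column span of dimension e
  have hMr_ind : LinearIndependent k (M.submatrix r id) := hr_ind
  have hMr_rank : (M.submatrix r id).rank = e := by
    exact hMr_ind.rank_matrix.trans (Fintype.card_fin _)
  have hcols : Module.finrank k
      (Submodule.span k (Set.range (M.submatrix r id).transpose)) = e := by
    exact (Matrix.rank_eq_finrank_span_cols _).symm.trans hMr_rank
  -- extract e linearly independent columns
  obtain ⟨c, hc_ind⟩ := exists_subfamily_linearIndependent hcols
  have hc_inj : Function.Injective c := fun j j' hjj => hc_ind.injective (by
    show (M.submatrix r id).transpose (c j) = (M.submatrix r id).transpose (c j'); rw [hjj])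
  -- the resulting e × e submatrix has nonzero determinant
  have hdet : (M.submatrix r c).det ≠ 0 := by
    apply det_ne_zero_of_cols_linearIndependent
    exact hc_ind
  -- permutations moving the chosen rows/columns to the top-left corner
  set emb : Fin e → Fin n' := fun i => finCongr hn'.symm (Fin.castAdd n i) with hembdef
  have hemb_inj : Function.Injective emb := by
    intro a b hab
    have : (a : ℕ) = b := by
      have := congrArg Fin.val hab
      simpa [hembdef] using this
    exact Fin.ext this
  obtain ⟨σ, hσ⟩ := exists_perm_comp_eq hemb_inj hr_inj
  obtain ⟨τ, hτ⟩ := exists_perm_comp_eq hemb_inj hc_inj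
  refine ⟨σ, τ, ?_⟩
  have hblock : (asBlocks hn' (X.submatrix σ τ)).toBlocks₁₁.map ρ = M.submatrix r c := by
    ext i j
    simp only [asBlocks, Matrix.toBlocks₁₁, Matrix.map_apply, Matrix.submatrix_apply,
      Matrix.of_apply, finSumFinEquiv_apply_left]
    rw [show (finCongr hn'.symm) (Fin.castAdd n i) = emb i from rfl,
      show (finCongr hn'.symm) (Fin.castAdd n j) = emb j from rfl, hσ, hτ, hX_uv]
    rfl
  rw [hblock]
  exact hdet
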